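/- arXiv:2403.15578 — 2 statements merged into one kernel-verified Lean document; each statement's English description precedes it below -/
import Mathlib

section
/- Let k ≥ 2, 1 ≤ r < k-1, p ≥ 1, with 2p+1 < diam(K(2k+r,k)). Let A, B be k-subsets of [2k+r] with |A ∩ B| ≤ rp - r. Then dist in K_{=2p+1}(2k+r,k) between A and B equals 2 if |A ∩ B| ≥ k - 2rp - r, and equals 3 if |A ∩ B| < k - 2rp - r. -/
/-- The Kneser graph: vertices are the `k`-subsets of `[n]`, adjacency is disjointness. -/
def kneserGraph (n k : ℕ) : SimpleGraph {A : Finset (Fin n) // A.card = k} where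
  Adj A B := A ≠ B ∧ Disjoint A.1 B.1
  symm := ⟨fun A B h => ⟨h.1.symm, h.2.symm⟩⟩
  loopless := ⟨fun A h => h.1 rfl⟩

/-- The exact distance-`d` graph of a graph `G`. -/
def exactDistanceGraph {V : Type*} (G : SimpleGraph V) (d : ℕ) : SimpleGraph V where
  Adj A B := A ≠ B ∧ G.dist A B = d
  symm := ⟨fun A B h => ⟨h.1.symm, by rw [SimpleGraph.dist_comm]; exact h.2⟩⟩
  loopless := ⟨fun A h => h.1 rfl⟩

namespace St16
open Finset
variable {k r : ℕ}

lemma compl_card (S : Finset (Fin (2*k+r))) : Sᶜ.card = 2*k+r - S.card := by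
  rw [Finset.card_compl, Fintype.card_fin]

/-- h1 -/
lemma inter_add_inter_le {X Z Y : Finset (Fin (2*k+r))} (hY : Y.card = k)
    (h : Disjoint X Z) : (X ∩ Y).card + (Z ∩ Y).card ≤ k := by
  rw [← Finset.card_union_of_disjoint (h.mono inter_subset_left inter_subset_left)]
  calc ((X ∩ Y) ∪ (Z ∩ Y)).card ≤ Y.card :=
        Finset.card_le_card (by intro a ha; simp at ha; tauto)
    _ = k := hY

/-- h2 -/
lemma le_inter_add_inter {X Z Y : Finset (Fin (2*k+r))} (hX : X.card = k) (hY : Y.card = k)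
    (hZ : Z.card = k) (h : Disjoint X Z) : k ≤ (X ∩ Y).card + r + (Z ∩ Y).card := by
  have hsub : X ∪ (Y \ Z) ⊆ Zᶜ := by
    apply Finset.union_subset
    · intro a ha; simp only [Finset.mem_compl]; exact fun hz => (Finset.disjoint_left.mp h) ha hz
    · intro a ha; simp only [Finset.mem_sdiff] at ha; simp [ha.2]
  have hc1 : (X ∪ (Y \ Z)).card ≤ k + r := by
    calc (X ∪ (Y \ Z)).card ≤ Zᶜ.card := Finset.card_le_card hsub
      _ = 2*k + r - k := by rw [compl_card, hZ]
      _ ≤ k + r := by omega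
  have hc2 : (X ∩ (Y \ Z)).card + (X ∪ (Y \ Z)).card = X.card + (Y \ Z).card :=
    Finset.card_inter_add_card_union _ _
  have hc3 : (Y ∩ Z).card + (Y \ Z).card = Y.card := Finset.card_inter_add_card_sdiff _ _
  have hc4 : X ∩ (Y \ Z) ⊆ X ∩ Y := by
    intro a ha; simp only [Finset.mem_inter, Finset.mem_sdiff] at ha ⊢; tauto
  have hc5 : (X ∩ (Y \ Z)).card ≤ (X ∩ Y).card := Finset.card_le_card hc4
  have hc6 : (Y ∩ Z).card = (Z ∩ Y).card := by rw [Finset.inter_comm]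
  omega

/-- L1: walk parity bounds. -/
lemma walk_parity {X Y : {A : Finset (Fin (2*k+r)) // A.card = k}}
    (w : (kneserGraph (2*k+r) k).Walk X Y) :
    (∀ j, w.length = 2*j → k ≤ (X.1 ∩ Y.1).card + j*r) ∧
    (∀ j, w.length = 2*j+1 → (X.1 ∩ Y.1).card ≤ j*r) := by
  induction w with
  | nil =>
    constructor
    · intro j hj
      simp only [SimpleGraph.Walk.length_nil] at hj
      have : (2:ℕ)*j = 0 := hj.symm
      have hj0 : j = 0 := by omega
      subst hj0
      rw [Finset.inter_self]
      omega
    · intro j hj; simp at hj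
  | @cons X Z Y h w ih =>
    constructor
    · intro j hj
      simp only [SimpleGraph.Walk.length_cons] at hj
      obtain ⟨i, rfl⟩ : ∃ i, j = i + 1 := ⟨j - 1, by omega⟩
      have hodd := ih.2 i (by omega)
      have hb := le_inter_add_inter (r := r) X.2 Y.2 Z.2 h.2
      have : (i+1)*r = i*r + r := by ring
      omega
    · intro j hj
      simp only [SimpleGraph.Walk.length_cons] at hj
      have heven := ih.1 j (by omega)
      have hb := inter_add_inter_le (r := r) Y.2 h.2
      omega

lemma adj_of_disjoint (hk : 0 < k) {X Z : {A : Finset (Fin (2*k+r)) // A.card = k}}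
    (hd : Disjoint X.1 Z.1) : (kneserGraph (2*k+r) k).Adj X Z := by
  refine ⟨fun he => ?_, hd⟩
  have : Z.1 = ∅ := by
    have h2 := hd
    rw [he] at h2
    exact disjoint_self.mp h2
  rw [← Z.2, this] at hk
  simp at hk

/-- Bridge: if two k-sets have small union, they are joined by a path of length 2. -/
lemma bridge (hk : 0 < k) {X W : {A : Finset (Fin (2*k+r)) // A.card = k}}
    (h : (X.1 ∪ W.1).card ≤ k + r) :
    ∃ Z, (kneserGraph (2*k+r) k).Adj X Z ∧ (kneserGraph (2*k+r) k).Adj Z W := by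
  have hcc : k ≤ (X.1 ∪ W.1)ᶜ.card := by
    rw [compl_card]; omega
  obtain ⟨Z, hZsub, hZcard⟩ := Finset.exists_subset_card_eq hcc
  have hdx : Disjoint X.1 Z := by
    rw [Finset.disjoint_right]
    intro a ha
    have := hZsub ha
    simp only [Finset.mem_compl, Finset.mem_union] at this
    tauto
  have hdw : Disjoint Z W.1 := by
    rw [Finset.disjoint_left]
    intro a ha
    have := hZsub ha
    simp only [Finset.mem_compl, Finset.mem_union] at this
    tauto
  exact ⟨⟨Z, hZcard⟩, adj_of_disjoint hk hdx, adj_of_disjoint hk hdw⟩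

/-- L2 odd: short odd walks. -/
lemma exists_walk_odd (hk : 0 < k) :
    ∀ (m : ℕ) (X Y : {A : Finset (Fin (2*k+r)) // A.card = k}),
      (X.1 ∩ Y.1).card ≤ m*r →
      ∃ w : (kneserGraph (2*k+r) k).Walk X Y, w.length ≤ 2*m+1 := by
  intro m
  induction m with
  | zero =>
    intro X Y hs
    simp only [Nat.zero_mul, Nat.le_zero, Finset.card_eq_zero, ← Finset.disjoint_iff_inter_eq_empty] at hs
    exact ⟨(adj_of_disjoint hk hs).toWalk, by simp⟩
  | succ m ih =>
    intro X Y hs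
    by_cases hle : (X.1 ∩ Y.1).card ≤ m*r
    · obtain ⟨w, hw⟩ := ih X Y hle
      exact ⟨w, by omega⟩
    push_neg at hle
    set s' := (X.1 ∩ Y.1).card with hs'
    set t := min r s' with ht
    obtain ⟨D, hDsub, hDcard⟩ : ∃ D ⊆ X.1 ∩ Y.1, D.card = t :=
      Finset.exists_subset_card_eq (by omega)
    have hDX : D ⊆ X.1 := hDsub.trans inter_subset_left
    have huc : (X.1 ∪ Y.1).card + s' = 2*k := by
      have := Finset.card_inter_add_card_union X.1 Y.1
      rw [X.2, Y.2] at this; omega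
    obtain ⟨E, hEsub, hEcard⟩ : ∃ E ⊆ (X.1 ∪ Y.1)ᶜ, E.card = t := by
      apply Finset.exists_subset_card_eq
      rw [compl_card]
      have hsk : (X.1 ∩ Y.1).card ≤ k := by
        have := Finset.card_le_card (Finset.inter_subset_left (s₁ := X.1) (s₂ := Y.1))
        rw [X.2] at this; exact this
      omega
    have hdisjE : Disjoint (X.1 \ D) E := by
      rw [Finset.disjoint_left]
      intro a ha
      have h1 : a ∈ X.1 := (Finset.mem_sdiff.mp ha).1
      intro hE
      have := hEsub hE
      simp only [Finset.mem_compl, Finset.mem_union] at this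
      tauto
    have hX2card : ((X.1 \ D) ∪ E).card = k := by
      rw [Finset.card_union_of_disjoint hdisjE, Finset.card_sdiff_of_subset hDX, X.2, hDcard, hEcard]
      have hsk : (X.1 ∩ Y.1).card ≤ k := by
        have := Finset.card_le_card (Finset.inter_subset_left (s₁ := X.1) (s₂ := Y.1))
        rw [X.2] at this; exact this
      omega
    set X₂ : {A : Finset (Fin (2*k+r)) // A.card = k} := ⟨(X.1 \ D) ∪ E, hX2card⟩ with hX₂
    have hinter : (X₂.1 ∩ Y.1).card = s' - t := by
      have hEY : E ∩ Y.1 = ∅ := by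
        rw [Finset.eq_empty_iff_forall_notMem]
        intro a ha
        have h1 := hEsub (Finset.mem_inter.mp ha).1
        simp only [Finset.mem_compl, Finset.mem_union, not_or] at h1
        exact h1.2 (Finset.mem_inter.mp ha).2
      have : X₂.1 ∩ Y.1 = (X.1 ∩ Y.1) \ D := by
        rw [hX₂]
        ext a
        simp only [Finset.union_inter_distrib_right, hEY, Finset.union_empty,
          Finset.mem_inter, Finset.mem_sdiff]
        tauto
      rw [this, Finset.card_sdiff_of_subset hDsub, hDcard]
    have hrec : (X₂.1 ∩ Y.1).card ≤ m*r := by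
      rw [hinter]
      have : (m+1)*r = m*r + r := by ring
      omega
    obtain ⟨w₂, hw₂⟩ := ih X₂ Y hrec
    have hun : (X.1 ∪ X₂.1).card ≤ k + r := by
      have hsub : X.1 ∪ X₂.1 ⊆ X.1 ∪ E := by
        intro a ha
        rcases Finset.mem_union.mp ha with h | h
        · exact Finset.mem_union_left _ h
        · rcases Finset.mem_union.mp h with h' | h'
          · exact Finset.mem_union_left _ (Finset.mem_sdiff.mp h').1
          · exact Finset.mem_union_right _ h'
      calc (X.1 ∪ X₂.1).card ≤ (X.1 ∪ E).card := Finset.card_le_card hsub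
        _ ≤ X.1.card + E.card := Finset.card_union_le _ _
        _ ≤ k + r := by rw [X.2, hEcard]; omega
    obtain ⟨Z, hZ1, hZ2⟩ := bridge hk hun
    refine ⟨SimpleGraph.Walk.cons hZ1 (SimpleGraph.Walk.cons hZ2 w₂), ?_⟩
    simp only [SimpleGraph.Walk.length_cons]
    omega

/-- L2 even: short even walks. -/
lemma exists_walk_even (hk : 0 < k) :
    ∀ (m : ℕ) (X Y : {A : Finset (Fin (2*k+r)) // A.card = k}),
      k ≤ (X.1 ∩ Y.1).card + m*r →
      ∃ w : (kneserGraph (2*k+r) k).Walk X Y, w.length ≤ 2*m := by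
  intro m
  induction m with
  | zero =>
    intro X Y hs
    simp only [Nat.zero_mul, Nat.add_zero] at hs
    have hXY : X = Y := by
      have h1 : X.1 ∩ Y.1 = X.1 := by
        apply Finset.eq_of_subset_of_card_le inter_subset_left
        rw [X.2]; exact hs
      have h2 : X.1 ⊆ Y.1 := by rw [← h1]; exact inter_subset_right
      exact Subtype.ext (Finset.eq_of_subset_of_card_le h2 (by rw [X.2, Y.2]))
    subst hXY
    exact ⟨SimpleGraph.Walk.nil, by simp⟩
  | succ m ih =>
    intro X Y hs
    by_cases hle : k ≤ (X.1 ∩ Y.1).card + m*r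
    · obtain ⟨w, hw⟩ := ih X Y hle
      exact ⟨w, by omega⟩
    push_neg at hle
    have hsk : (X.1 ∩ Y.1).card ≤ k := by
      have := Finset.card_le_card (Finset.inter_subset_left (s₁ := X.1) (s₂ := Y.1))
      rw [X.2] at this; exact this
    set s' := (X.1 ∩ Y.1).card with hs'
    set t := min r (k - s') with ht
    have hXYc : (X.1 ∩ Y.1).card + (X.1 \ Y.1).card = k := by
      have := Finset.card_inter_add_card_sdiff X.1 Y.1
      rw [X.2] at this; exact this
    have hYXc : (Y.1 ∩ X.1).card + (Y.1 \ X.1).card = k := by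
      have := Finset.card_inter_add_card_sdiff Y.1 X.1
      rw [Y.2] at this; exact this
    have hYXi : (Y.1 ∩ X.1).card = s' := by rw [Finset.inter_comm]
    obtain ⟨D, hDsub, hDcard⟩ : ∃ D ⊆ X.1 \ Y.1, D.card = t :=
      Finset.exists_subset_card_eq (by omega)
    obtain ⟨E, hEsub, hEcard⟩ : ∃ E ⊆ Y.1 \ X.1, E.card = t :=
      Finset.exists_subset_card_eq (by omega)
    have hDX : D ⊆ X.1 := hDsub.trans sdiff_subset
    have hdisjE : Disjoint (X.1 \ D) E := by
      rw [Finset.disjoint_right]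
      intro a ha
      have h1 := hEsub ha
      simp only [Finset.mem_sdiff] at h1 ⊢
      tauto
    have hX2card : ((X.1 \ D) ∪ E).card = k := by
      rw [Finset.card_union_of_disjoint hdisjE, Finset.card_sdiff_of_subset hDX, X.2, hDcard, hEcard]
      omega
    set X₂ : {A : Finset (Fin (2*k+r)) // A.card = k} := ⟨(X.1 \ D) ∪ E, hX2card⟩ with hX₂
    have hinter : (X₂.1 ∩ Y.1).card = s' + t := by
      have heq : X₂.1 ∩ Y.1 = (X.1 ∩ Y.1) ∪ E := by
        rw [hX₂]
        ext a
        simp only [Finset.union_inter_distrib_right, Finset.mem_union, Finset.mem_inter,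
          Finset.mem_sdiff]
        constructor
        · rintro (⟨⟨hx, hd⟩, hy⟩ | ⟨he, hy⟩)
          · exact Or.inl ⟨hx, hy⟩
          · exact Or.inr he
        · rintro (⟨hx, hy⟩ | he)
          · have had : a ∉ D := fun hD => (Finset.mem_sdiff.mp (hDsub hD)).2 hy
            exact Or.inl ⟨⟨hx, had⟩, hy⟩
          · have := Finset.mem_sdiff.mp (hEsub he)
            exact Or.inr ⟨he, this.1⟩
      rw [heq, Finset.card_union_of_disjoint, hEcard]
      rw [Finset.disjoint_right]
      intro a ha
      have := (Finset.mem_sdiff.mp (hEsub ha)).2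
      simp only [Finset.mem_inter]
      tauto
    have hrec : k ≤ (X₂.1 ∩ Y.1).card + m*r := by
      rw [hinter]
      rcases le_or_gt r (k - s') with h | h
      · have : t = r := by omega
        have h2 : (m+1)*r = m*r + r := by ring
        omega
      · have : t = k - s' := by omega
        omega
    obtain ⟨w₂, hw₂⟩ := ih X₂ Y hrec
    have hun : (X.1 ∪ X₂.1).card ≤ k + r := by
      have hsub : X.1 ∪ X₂.1 ⊆ X.1 ∪ E := by
        intro a ha
        rcases Finset.mem_union.mp ha with h | h
        · exact Finset.mem_union_left _ h
        · rcases Finset.mem_union.mp h with h' | h'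
          · exact Finset.mem_union_left _ (Finset.mem_sdiff.mp h').1
          · exact Finset.mem_union_right _ h'
      calc (X.1 ∪ X₂.1).card ≤ (X.1 ∪ E).card := Finset.card_le_card hsub
        _ ≤ X.1.card + E.card := Finset.card_union_le _ _
        _ ≤ k + r := by rw [X.2, hEcard]; omega
    obtain ⟨Z, hZ1, hZ2⟩ := bridge hk hun
    refine ⟨SimpleGraph.Walk.cons hZ1 (SimpleGraph.Walk.cons hZ2 w₂), ?_⟩
    simp only [SimpleGraph.Walk.length_cons]
    omega

/-- Builder: a k-set with prescribed intersection sizes with S and T. -/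
lemma exists_mid (a b : ℕ) (S T : Finset (Fin (2*k+r))) (hS : S.card = k) (hT : T.card = k)
    (ha : a + (S ∩ T).card ≤ k) (hb : b + (S ∩ T).card ≤ k) (hab : a + b ≤ k)
    (hout : k ≤ a + b + r + (S ∩ T).card) :
    ∃ C : Finset (Fin (2*k+r)), C.card = k ∧ (S ∩ C).card = a ∧ (T ∩ C).card = b := by
  set s' := (S ∩ T).card with hs'
  have hST : (S ∩ T).card + (S \ T).card = k := by
    have := Finset.card_inter_add_card_sdiff S T; rw [hS] at this; exact this
  have hTS : (T ∩ S).card + (T \ S).card = k := by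
    have := Finset.card_inter_add_card_sdiff T S; rw [hT] at this; exact this
  have hTSi : (T ∩ S).card = s' := by rw [Finset.inter_comm]
  have huc : (S ∪ T).card + s' = 2*k := by
    have := Finset.card_inter_add_card_union S T
    rw [hS, hT] at this; omega
  obtain ⟨P, hPsub, hPcard⟩ : ∃ P ⊆ S \ T, P.card = a :=
    Finset.exists_subset_card_eq (by omega)
  obtain ⟨Q, hQsub, hQcard⟩ : ∃ Q ⊆ T \ S, Q.card = b :=
    Finset.exists_subset_card_eq (by omega)
  obtain ⟨R, hRsub, hRcard⟩ : ∃ R ⊆ (S ∪ T)ᶜ, R.card = k - a - b := by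
    apply Finset.exists_subset_card_eq
    rw [compl_card]
    omega
  have hPQ : Disjoint P Q := (disjoint_sdiff_sdiff).mono hPsub hQsub
  have hPQS : P ∪ Q ⊆ S ∪ T := by
    apply Finset.union_subset
    · exact (hPsub.trans sdiff_subset).trans Finset.subset_union_left
    · exact (hQsub.trans sdiff_subset).trans Finset.subset_union_right
  have hR : Disjoint (P ∪ Q) R := by
    rw [Finset.disjoint_right]
    intro x hx
    have := hRsub hx
    simp only [Finset.mem_compl] at this
    exact fun hmem => this (hPQS hmem)
  refine ⟨(P ∪ Q) ∪ R, ?_, ?_, ?_⟩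
  · rw [Finset.card_union_of_disjoint hR, Finset.card_union_of_disjoint hPQ,
      hPcard, hQcard, hRcard]
    omega
  · have : S ∩ ((P ∪ Q) ∪ R) = P := by
      ext x
      simp only [Finset.mem_inter, Finset.mem_union]
      constructor
      · rintro ⟨hxS, (hP | hQ) | hR'⟩
        · exact hP
        · exact absurd hxS (Finset.mem_sdiff.mp (hQsub hQ)).2
        · exact absurd (Finset.mem_union_left _ hxS)
            (Finset.mem_compl.mp (hRsub hR'))
      · intro hP
        exact ⟨(Finset.mem_sdiff.mp (hPsub hP)).1, Or.inl (Or.inl hP)⟩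
    rw [this, hPcard]
  · have : T ∩ ((P ∪ Q) ∪ R) = Q := by
      ext x
      simp only [Finset.mem_inter, Finset.mem_union]
      constructor
      · rintro ⟨hxT, (hP | hQ) | hR'⟩
        · exact absurd hxT (Finset.mem_sdiff.mp (hPsub hP)).2
        · exact hQ
        · exact absurd (Finset.mem_union_right _ hxT)
            (Finset.mem_compl.mp (hRsub hR'))
      · intro hQ
        exact ⟨(Finset.mem_sdiff.mp (hQsub hQ)).1, Or.inl (Or.inr hQ)⟩
    rw [this, hQcard]

lemma inter_card_le (X Y : {A : Finset (Fin (2*k+r)) // A.card = k}) :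
    (X.1 ∩ Y.1).card ≤ k := by
  have := Finset.card_le_card (Finset.inter_subset_left (s₁ := X.1) (s₂ := Y.1))
  rw [X.2] at this; exact this

lemma reach (hr1 : 1 ≤ r) (hk : 0 < k) (X Y : {A : Finset (Fin (2*k+r)) // A.card = k}) :
    (kneserGraph (2*k+r) k).Reachable X Y := by
  obtain ⟨w, _⟩ := exists_walk_odd hk k X Y
    (le_trans (inter_card_le X Y) (Nat.le_mul_of_pos_right k hr1))
  exact ⟨w⟩

lemma dist_exact (hr1 : 1 ≤ r) {p : ℕ} (hp : 1 ≤ p) (hk2 : 2*(r*p) + 1 ≤ k)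
    {X Y : {A : Finset (Fin (2*k+r)) // A.card = k}} (hXY : (X.1 ∩ Y.1).card = r*p) :
    (kneserGraph (2*k+r) k).dist X Y = 2*p+1 := by
  have hrp1 : 1 ≤ r*p := Nat.one_le_iff_ne_zero.mpr (by positivity)
  have hk : 0 < k := by omega
  have hub : (kneserGraph (2*k+r) k).dist X Y ≤ 2*p+1 := by
    obtain ⟨w, hw⟩ := exists_walk_odd hk p X Y (by rw [hXY, Nat.mul_comm])
    exact le_trans (SimpleGraph.dist_le w) hw
  refine le_antisymm hub ?_
  by_contra hlt
  push_neg at hlt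
  obtain ⟨w, hw⟩ := (reach hr1 hk X Y).exists_walk_length_eq_dist
  obtain ⟨j, hj | hj⟩ := Nat.even_or_odd' w.length
  · have h1 := (walk_parity w).1 j hj
    rw [hXY] at h1
    have hjp : j ≤ p := by omega
    have h2 : j*r ≤ p*r := Nat.mul_le_mul_right r hjp
    have h3 : p*r = r*p := Nat.mul_comm p r
    linarith
  · have h1 := (walk_parity w).2 j hj
    rw [hXY] at h1
    have hjp : j + 1 ≤ p := by omega
    have h2 : (j+1)*r ≤ p*r := Nat.mul_le_mul_right r hjp
    have h3 : (j+1)*r = j*r + r := by ring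
    have h4 : p*r = r*p := Nat.mul_comm p r
    linarith

lemma adjH (hr1 : 1 ≤ r) {p : ℕ} (hp : 1 ≤ p) (hk2 : 2*(r*p) + 1 ≤ k)
    {X Y : {A : Finset (Fin (2*k+r)) // A.card = k}} (hXY : (X.1 ∩ Y.1).card = r*p) :
    (exactDistanceGraph (kneserGraph (2*k+r) k) (2*p+1)).Adj X Y := by
  refine ⟨fun he => ?_, dist_exact hr1 hp hk2 hXY⟩
  rw [he, Finset.inter_self, Y.2] at hXY
  linarith

lemma k_large (hr1 : 1 ≤ r) {p : ℕ} (hp : 1 ≤ p) (hk : 0 < k)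
    (hd : 2*p+1 < (kneserGraph (2*k+r) k).diam) : 2*(r*p) + 1 ≤ k := by
  by_contra hcon
  push_neg at hcon
  have hall : ∀ X Y : {A : Finset (Fin (2*k+r)) // A.card = k},
      ∃ w : (kneserGraph (2*k+r) k).Walk X Y, w.length ≤ 2*p+1 := by
    intro X Y
    by_cases hc : (X.1 ∩ Y.1).card ≤ p*r
    · exact exists_walk_odd hk p X Y hc
    · push_neg at hc
      have h3 : p*r = r*p := Nat.mul_comm p r
      obtain ⟨w, hw⟩ := exists_walk_even hk p X Y (by linarith)
      exact ⟨w, by omega⟩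
  have hediam : (kneserGraph (2*k+r) k).ediam ≤ (2*p+1 : ℕ) := by
    apply SimpleGraph.ediam_le_of_edist_le
    intro u v
    obtain ⟨w, hw⟩ := hall u v
    calc (kneserGraph (2*k+r) k).edist u v ≤ w.length := SimpleGraph.Walk.edist_le w
      _ ≤ ((2*p+1 : ℕ) : ℕ∞) := by exact_mod_cast Nat.cast_le.mpr hw
  have : (kneserGraph (2*k+r) k).diam ≤ 2*p+1 := ENat.toNat_le_of_le_coe hediam
  omega

end St16

theorem stmt16 (k r p : ℕ) (hk : 2 ≤ k) (hr : 1 ≤ r) (hrk : r < k - 1) (hp : 1 ≤ p)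
    (hd : 2 * p + 1 < (kneserGraph (2 * k + r) k).diam)
    (A B : {A : Finset (Fin (2 * k + r)) // A.card = k})
    (hs : (A.1 ∩ B.1).card ≤ r * p - r) :
    (k - 2 * r * p - r ≤ (A.1 ∩ B.1).card →
      (exactDistanceGraph (kneserGraph (2 * k + r) k) (2 * p + 1)).dist A B = 2) ∧
    ((A.1 ∩ B.1).card < k - 2 * r * p - r →
      (exactDistanceGraph (kneserGraph (2 * k + r) k) (2 * p + 1)).dist A B = 3) := by
  classical
  have hk0 : 0 < k := by omega
  have hk2 : 2*(r*p) + 1 ≤ k := St16.k_large hr hp hk0 hd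
  have hk2' := hk2
  obtain ⟨q, rfl⟩ : ∃ q, p = q + 1 := ⟨p - 1, by omega⟩
  obtain ⟨m, hm⟩ : ∃ m, r*q = m := ⟨_, rfl⟩
  have e1 : r*(q+1) = m + r := by rw [← hm]; ring
  have e2 : 2*r*(q+1) = 2*m + 2*r := by rw [← hm]; ring
  have e3 : (q+1)*r = m + r := by rw [← hm]; ring
  have eq' : q*r = m := by rw [← hm]; ring
  rw [e1] at hs
  rw [e1] at hk2
  have hsm : (A.1 ∩ B.1).card ≤ m := by omega
  have hsk : (A.1 ∩ B.1).card ≤ k := St16.inter_card_le A B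
  have huc : (A.1 ∪ B.1).card + (A.1 ∩ B.1).card = 2*k := by
    have := Finset.card_inter_add_card_union A.1 B.1
    rw [A.2, B.2] at this; omega
  have hAB : A ≠ B := by
    intro he
    have hcc : (A.1 ∩ B.1).card = k := by rw [he, Finset.inter_self, B.2]
    omega
  have hnadj : ¬ (exactDistanceGraph (kneserGraph (2*k+r) k) (2*(q+1)+1)).Adj A B := by
    rintro ⟨-, hdist⟩
    obtain ⟨w, hw⟩ := St16.exists_walk_odd hk0 q A B (by omega)
    have := SimpleGraph.dist_le w
    omega
  constructor
  · -- distance 2 case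
    intro h2
    rw [e2] at h2
    have h2' : k ≤ 2*m + 2*r + r + (A.1 ∩ B.1).card := by omega
    obtain ⟨C, hC, hCA, hCB⟩ := St16.exists_mid (m+r) (m+r) A.1 B.1 A.2 B.2
      (by omega) (by omega) (by omega) (by omega)
    have hadjAC : (exactDistanceGraph (kneserGraph (2*k+r) k) (2*(q+1)+1)).Adj A ⟨C, hC⟩ :=
      St16.adjH hr hp hk2' (by rw [e1]; exact hCA)
    have hadjCB : (exactDistanceGraph (kneserGraph (2*k+r) k) (2*(q+1)+1)).Adj ⟨C, hC⟩ B :=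
      St16.adjH hr hp hk2' (by rw [e1, Finset.inter_comm]; exact hCB)
    have hle2 := SimpleGraph.dist_le (SimpleGraph.Walk.cons hadjAC
      (SimpleGraph.Walk.cons hadjCB SimpleGraph.Walk.nil))
    simp only [SimpleGraph.Walk.length_cons, SimpleGraph.Walk.length_nil] at hle2
    have hreach : (exactDistanceGraph (kneserGraph (2*k+r) k) (2*(q+1)+1)).Reachable A B :=
      ⟨SimpleGraph.Walk.cons hadjAC (SimpleGraph.Walk.cons hadjCB SimpleGraph.Walk.nil)⟩
    have hpos := hreach.pos_dist_of_ne hAB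
    have hne1 : (exactDistanceGraph (kneserGraph (2*k+r) k) (2*(q+1)+1)).dist A B ≠ 1 :=
      fun h => hnadj (SimpleGraph.dist_eq_one_iff_adj.mp h)
    omega
  · -- distance 3 case
    intro h3
    rw [e2] at h3
    have h3' : (A.1 ∩ B.1).card + (2*m + 2*r) + r < k := by omega
    obtain ⟨C, hC, hCA, hCB⟩ := St16.exists_mid (m+r) (k-(m+r)) A.1 B.1 A.2 B.2
      (by omega) (by omega) (by omega) (by omega)
    have hCBc : (C ∩ B.1).card = k - (m+r) := by rw [Finset.inter_comm]; exact hCB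
    obtain ⟨D, hD, hDC, hDB⟩ := St16.exists_mid (m+r) (m+r) C B.1 hC B.2
      (by omega) (by omega) (by omega) (by omega)
    have hadjAC : (exactDistanceGraph (kneserGraph (2*k+r) k) (2*(q+1)+1)).Adj A ⟨C, hC⟩ :=
      St16.adjH hr hp hk2' (by rw [e1]; exact hCA)
    have hadjCD : (exactDistanceGraph (kneserGraph (2*k+r) k) (2*(q+1)+1)).Adj ⟨C, hC⟩ ⟨D, hD⟩ :=
      St16.adjH hr hp hk2' (by rw [e1]; exact hDC)
    have hadjDB : (exactDistanceGraph (kneserGraph (2*k+r) k) (2*(q+1)+1)).Adj ⟨D, hD⟩ B :=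
      St16.adjH hr hp hk2' (by rw [e1, Finset.inter_comm]; exact hDB)
    have hle3 := SimpleGraph.dist_le (SimpleGraph.Walk.cons hadjAC
      (SimpleGraph.Walk.cons hadjCD (SimpleGraph.Walk.cons hadjDB SimpleGraph.Walk.nil)))
    simp only [SimpleGraph.Walk.length_cons, SimpleGraph.Walk.length_nil] at hle3
    have hreach : (exactDistanceGraph (kneserGraph (2*k+r) k) (2*(q+1)+1)).Reachable A B :=
      ⟨SimpleGraph.Walk.cons hadjAC (SimpleGraph.Walk.cons hadjCD
        (SimpleGraph.Walk.cons hadjDB SimpleGraph.Walk.nil))⟩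
    have hpos := hreach.pos_dist_of_ne hAB
    have hne1 : (exactDistanceGraph (kneserGraph (2*k+r) k) (2*(q+1)+1)).dist A B ≠ 1 :=
      fun h => hnadj (SimpleGraph.dist_eq_one_iff_adj.mp h)
    have hne2 : (exactDistanceGraph (kneserGraph (2*k+r) k) (2*(q+1)+1)).dist A B ≠ 2 := by
      intro hd2
      obtain ⟨w2, hw2⟩ := hreach.exists_walk_length_eq_dist
      rw [hd2] at hw2
      set M := w2.getVert 1 with hM
      have hAM : (exactDistanceGraph (kneserGraph (2*k+r) k) (2*(q+1)+1)).Adj A M := by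
        have h := w2.adj_getVert_succ (i := 0) (by omega)
        rwa [SimpleGraph.Walk.getVert_zero] at h
      have hMB : (exactDistanceGraph (kneserGraph (2*k+r) k) (2*(q+1)+1)).Adj M B := by
        have h := w2.adj_getVert_succ (i := 1) (by omega)
        have h2 := w2.getVert_length
        rw [hw2] at h2
        rwa [h2] at h
      obtain ⟨-, hAMdist⟩ := hAM
      obtain ⟨-, hMBdist⟩ := hMB
      have hAMd : (A.1 ∩ M.1).card ≤ m + r := by
        obtain ⟨wam, hwam⟩ := (St16.reach hr hk0 A M).exists_walk_length_eq_dist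
        rw [hAMdist] at hwam
        have := (St16.walk_parity wam).2 (q+1) hwam
        omega
      have hMBd : (M.1 ∩ B.1).card ≤ m + r := by
        obtain ⟨wmb, hwmb⟩ := (St16.reach hr hk0 M B).exists_walk_length_eq_dist
        rw [hMBdist] at hwmb
        have := (St16.walk_parity wmb).2 (q+1) hwmb
        omega
      have c1 : (M.1 ∩ (A.1 ∪ B.1)).card + (M.1 \ (A.1 ∪ B.1)).card = k := by
        have := Finset.card_inter_add_card_sdiff M.1 (A.1 ∪ B.1)
        rw [M.2] at this; exact this
      have c2 : (M.1 ∩ (A.1 ∪ B.1)).card ≤ (M.1 ∩ A.1).card + (M.1 ∩ B.1).card := by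
        rw [Finset.inter_union_distrib_left]
        exact Finset.card_union_le _ _
      have c3 : (M.1 \ (A.1 ∪ B.1)).card ≤ ((A.1 ∪ B.1)ᶜ).card := by
        apply Finset.card_le_card
        intro x hx
        simp only [Finset.mem_sdiff] at hx
        simp only [Finset.mem_compl]
        exact hx.2
      have c4 : ((A.1 ∪ B.1)ᶜ).card = 2*k + r - (A.1 ∪ B.1).card := St16.compl_card _
      have c5 : (M.1 ∩ A.1).card = (A.1 ∩ M.1).card := by rw [Finset.inter_comm]
      omega
    omega
end

section
/- Let k ≥ 2, 1 ≤ r < k-1, p ≥ 1, with 2p+1 < diam(K(2k+r,k)). If A and B are k-subsets of [2k+r] joined by a path of length 2ℓ in K_{=2p+1}(2k+r,k), then |A ∩ B| ≥ k - 2ℓrp - rℓ; if joined by a path of length 2ℓ+1, then |A ∩ B| ≤ (2ℓ+1)rp + rℓ. -/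
/-- A walk in the exact-distance-`d` graph yields a walk of `d` times the length in `G`. -/
lemma exact_to_base {V : Type*} {G : SimpleGraph V} {d : ℕ} (hd : d ≠ 0) :
    ∀ {A B : V} (w : (exactDistanceGraph G d).Walk A B),
      ∃ w' : G.Walk A B, w'.length = d * w.length := by
  intro A B w
  induction w with
  | nil => exact ⟨SimpleGraph.Walk.nil, by simp⟩
  | cons h w ih =>
    obtain ⟨w1, hw1⟩ := ih
    have hdist : G.dist _ _ = d := h.2
    obtain ⟨w0, hw0⟩ := SimpleGraph.exists_walk_of_dist_ne_zero (by rw [hdist]; exact hd)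
    exact ⟨w0.append w1, by
      rw [SimpleGraph.Walk.length_append, hw0, hw1, hdist,
        SimpleGraph.Walk.length_cons]; ring⟩

/-- Parity bounds for intersections along a walk in the Kneser graph `K(2k+r, k)`. -/
lemma kneser_walk_bound (k r : ℕ) :
    ∀ {X Y : {A : Finset (Fin (2 * k + r)) // A.card = k}}
      (w : (kneserGraph (2 * k + r) k).Walk X Y) (m : ℕ),
      (w.length = 2 * m → k ≤ (X.1 ∩ Y.1).card + r * m) ∧
      (w.length = 2 * m + 1 → (X.1 ∩ Y.1).card ≤ r * m) := by
  intro X Y w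
  induction w with
  | @nil X' =>
    intro m
    refine ⟨fun _ => ?_, fun h => by simp at h⟩
    rw [Finset.inter_self, X'.2]
    omega
  | @cons X Z Y h w ih =>
    intro m
    have hdisj : Disjoint X.1 Z.1 := h.2
    constructor
    · -- even case: length = 2m, so w.length = 2(m-1)+1
      intro hlen
      simp only [SimpleGraph.Walk.length_cons] at hlen
      have hm : 1 ≤ m := by omega
      have hodd : w.length = 2 * (m - 1) + 1 := by omega
      have hZY : (Z.1 ∩ Y.1).card ≤ r * (m - 1) := (ih (m - 1)).2 hodd
      -- Y ⊆ (Y ∩ X) ∪ (Y ∩ Z) ∪ (X ∪ Z)ᶜ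
      have hsub : Y.1 ⊆ (Y.1 ∩ X.1) ∪ (Y.1 ∩ Z.1) ∪ (X.1 ∪ Z.1)ᶜ := by
        intro a ha
        simp only [Finset.mem_union, Finset.mem_inter, Finset.mem_compl]
        by_cases hx : a ∈ X.1
        · exact Or.inl (Or.inl ⟨ha, hx⟩)
        · by_cases hz : a ∈ Z.1
          · exact Or.inl (Or.inr ⟨ha, hz⟩)
          · exact Or.inr (by simp [hx, hz])
      have hcompl : ((X.1 ∪ Z.1)ᶜ : Finset (Fin (2 * k + r))).card = r := by
        rw [Finset.card_compl, Finset.card_union_of_disjoint hdisj, X.2, Z.2]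
        simp [Fintype.card_fin]
        omega
      have hcard : k ≤ (Y.1 ∩ X.1).card + (Y.1 ∩ Z.1).card + r := by
        calc k = Y.1.card := Y.2.symm
          _ ≤ ((Y.1 ∩ X.1) ∪ (Y.1 ∩ Z.1) ∪ (X.1 ∪ Z.1)ᶜ).card := Finset.card_le_card hsub
          _ ≤ ((Y.1 ∩ X.1) ∪ (Y.1 ∩ Z.1)).card + ((X.1 ∪ Z.1)ᶜ).card :=
              Finset.card_union_le _ _
          _ ≤ (Y.1 ∩ X.1).card + (Y.1 ∩ Z.1).card + r := by
              rw [hcompl]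
              exact Nat.add_le_add_right (Finset.card_union_le _ _) r
      rw [Finset.inter_comm] at hcard
      have hrm : r * (m - 1) + r ≤ r * m := by
        have : r * (m - 1) + r = r * (m - 1 + 1) := by ring
        rw [this]
        exact Nat.mul_le_mul_left r (by omega)
      rw [Finset.inter_comm Y.1 Z.1] at hcard
      omega
    · -- odd case: length = 2m + 1, so w.length = 2m
      intro hlen
      simp only [SimpleGraph.Walk.length_cons] at hlen
      have heven : w.length = 2 * m := by omega
      have hZY : k ≤ (Z.1 ∩ Y.1).card + r * m := (ih m).1 heven
      have hdisj2 : Disjoint (X.1 ∩ Y.1) (Z.1 ∩ Y.1) :=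
        Finset.disjoint_of_subset_left Finset.inter_subset_left
          (Finset.disjoint_of_subset_right Finset.inter_subset_left hdisj)
      have hsub : (X.1 ∩ Y.1) ∪ (Z.1 ∩ Y.1) ⊆ Y.1 := by
        intro a ha
        rcases Finset.mem_union.mp ha with h1 | h1 <;>
          exact (Finset.mem_inter.mp h1).2
      have : (X.1 ∩ Y.1).card + (Z.1 ∩ Y.1).card ≤ k := by
        rw [← Finset.card_union_of_disjoint hdisj2]
        calc _ ≤ Y.1.card := Finset.card_le_card hsub
          _ = k := Y.2
      omega

theorem stmt17 (k r p ℓ : ℕ) (hk : 2 ≤ k) (hr : 1 ≤ r) (hrk : r < k - 1) (hp : 1 ≤ p)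
    (hd : 2 * p + 1 < (kneserGraph (2 * k + r) k).diam)
    (A B : {A : Finset (Fin (2 * k + r)) // A.card = k}) :
    ((∃ w : (exactDistanceGraph (kneserGraph (2 * k + r) k) (2 * p + 1)).Walk A B,
        w.length = 2 * ℓ) → k - 2 * ℓ * r * p - r * ℓ ≤ (A.1 ∩ B.1).card) ∧
    ((∃ w : (exactDistanceGraph (kneserGraph (2 * k + r) k) (2 * p + 1)).Walk A B,
        w.length = 2 * ℓ + 1) → (A.1 ∩ B.1).card ≤ (2 * ℓ + 1) * r * p + r * ℓ) := by
  constructor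
  · rintro ⟨w, hw⟩
    obtain ⟨w', hw'⟩ := exact_to_base (G := kneserGraph (2 * k + r) k)
      (d := 2 * p + 1) (by omega) w
    have hlen : w'.length = 2 * ((2 * p + 1) * ℓ) := by rw [hw', hw]; ring
    have := (kneser_walk_bound k r w' ((2 * p + 1) * ℓ)).1 hlen
    have harith : r * ((2 * p + 1) * ℓ) = 2 * ℓ * r * p + r * ℓ := by ring
    omega
  · rintro ⟨w, hw⟩
    obtain ⟨w', hw'⟩ := exact_to_base (G := kneserGraph (2 * k + r) k)
      (d := 2 * p + 1) (by omega) w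
    have hlen : w'.length = 2 * ((2 * p + 1) * ℓ + p) + 1 := by rw [hw', hw]; ring
    have := (kneser_walk_bound k r w' ((2 * p + 1) * ℓ + p)).2 hlen
    have harith : r * ((2 * p + 1) * ℓ + p) = (2 * ℓ + 1) * r * p + r * ℓ := by ring
    omega
end
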